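/- Let $S$ be a real trigonometric polynomial of degree at most $n$, let $\alpha\in(0,1)$, and suppose the set $\{t\in[0,2\pi): |S(t)|\leq\alpha\|S\|_K\}$ is a finite disjoint union of intervals $I_1,\dots,I_m$, each containing a point $y_j$ with $|S(y_j)|=\alpha\|S\|_K$. If $\mu_j$ denotes the number of zeros of $S$ (with multiplicity) in $I_j$, then $\mu_j\leq \frac{en}{\alpha}|I_j|$ for each $j$. -/

import Mathlib

section Aux
open Polynomial Finset Complex

open Nat in
theorem iterDerivTop (N : ℕ) : ∀ (p : ℝ[X]), p.natDegree ≤ N →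
    derivative^[N] p = C ((N ! : ℝ) * p.coeff N) := by
  induction N with
  | zero =>
    intro p hp
    rw [Nat.le_zero] at hp
    obtain ⟨c, rfl⟩ := Polynomial.natDegree_eq_zero.mp hp
    simp
  | succ N ih =>
    intro p hp
    rw [Function.iterate_succ_apply, ih _ ((Polynomial.natDegree_derivative_le p).trans ?_),
      Polynomial.coeff_derivative]
    · congr 1
      rw [Nat.factorial_succ]
      push_cast
      ring
    · omega


theorem polyContDiff (p : ℝ[X]) : ContDiff ℝ (⊤ : ℕ∞) fun t : ℝ => p.eval t := by
  have : (fun t : ℝ => p.eval t) =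
      fun t : ℝ => ∑ i ∈ Finset.range (p.natDegree + 1), p.coeff i * t ^ i := by
    funext t
    exact p.eval_eq_sum_range t
  rw [this]
  exact ContDiff.sum fun i _ => (contDiff_const.mul (contDiff_id.pow i))

theorem itdEval (k : ℕ) : ∀ (p : ℝ[X]),
    iteratedDeriv k (fun t : ℝ => p.eval t) = fun t : ℝ => (derivative^[k] p).eval t := by
  induction k with
  | zero => simp
  | succ k ihk =>
    intro p
    rw [iteratedDeriv_succ', Function.iterate_succ_apply, ← ihk (derivative p)]
    have h : deriv (fun t : ℝ => p.eval t) = fun t : ℝ => (derivative p).eval t :=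
      funext fun t => Polynomial.deriv (p := p)
    rw [h]

theorem itd_sub_mul (i : ℕ) (f g : ℝ → ℝ) (c : ℝ) (hf : ContDiff ℝ (⊤ : ℕ∞) f)
    (hg : ContDiff ℝ (⊤ : ℕ∞) g) (t : ℝ) :
    iteratedDeriv i (fun x => f x - c * g x) t = iteratedDeriv i f t - c * iteratedDeriv i g t := by
  have h1 : (fun x => f x - c * g x) = f - fun x => c * g x := rfl
  rw [h1, ← iteratedDerivWithin_univ, ← iteratedDerivWithin_univ, ← iteratedDerivWithin_univ,
    iteratedDerivWithin_sub (Set.mem_univ t) uniqueDiffOn_univ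
      (hf.contDiffOn.of_le (by exact_mod_cast le_top) t (Set.mem_univ t))
      ((contDiff_const.mul hg).contDiffOn.of_le (by exact_mod_cast le_top) t (Set.mem_univ t)),
    iteratedDerivWithin_const_mul (Set.mem_univ t) uniqueDiffOn_univ _
      (hg.contDiffOn.of_le (by exact_mod_cast le_top) t (Set.mem_univ t))]

theorem hermite_bound (f : ℝ → ℝ) (hf : ContDiff ℝ (⊤ : ℕ∞) f) (A B : ℝ) (s : Finset ℝ)
    (m : ℝ → ℕ) (hmem : ∀ x ∈ s, x ∈ Set.Icc A B) (hm1 : ∀ x ∈ s, m x ≠ 0)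
    (hz : ∀ x ∈ s, ∀ i < m x, iteratedDeriv i f x = 0)
    (y : ℝ) (hy : y ∈ Set.Icc A B) (hyns : y ∉ s) (K : ℝ)
    (hK : ∀ t ∈ Set.Icc A B, |iteratedDeriv (∑ x ∈ s, m x) f t| ≤ K)
    (hgenRolle : ∀ (N : ℕ) (g : ℝ → ℝ), ContDiff ℝ (⊤ : ℕ∞) g →
      ∀ (A B : ℝ) (s : Finset ℝ) (m : ℝ → ℕ),
      (∀ x ∈ s, x ∈ Set.Icc A B) → (∀ x ∈ s, ∀ i < m x, iteratedDeriv i g x = 0) →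
      N + 1 ≤ ∑ x ∈ s, m x → ∃ ξ ∈ Set.Icc A B, iteratedDeriv N g ξ = 0) :
    |f y| ≤ (B - A) ^ (∑ x ∈ s, m x) / (Nat.factorial (∑ x ∈ s, m x) : ℝ) * K := by
  classical
  set N := ∑ x ∈ s, m x with hN
  set ω : ℝ[X] := ∏ x ∈ s, (X - C x) ^ m x with hω
  have hmonic : ω.Monic :=
    Polynomial.monic_prod_of_monic _ _ fun x _ => (monic_X_sub_C x).pow (m x)
  have hdeg : ω.natDegree = N := by
    rw [hω, Polynomial.natDegree_prod_of_monic _ _ fun x _ => (monic_X_sub_C x).pow (m x)]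
    apply Finset.sum_congr rfl
    intro x _
    rw [Polynomial.natDegree_pow, Polynomial.natDegree_X_sub_C, mul_one]
  have hcoeff : ω.coeff N = 1 := by rw [← hdeg]; exact hmonic.coeff_natDegree
  have hωy : ω.eval y ≠ 0 := by
    rw [hω, Polynomial.eval_prod]
    rw [Finset.prod_ne_zero_iff]
    intro x hx
    simp only [Polynomial.eval_pow, Polynomial.eval_sub, Polynomial.eval_X, Polynomial.eval_C]
    apply pow_ne_zero
    intro hc
    exact hyns (by rwa [sub_eq_zero.mp hc])
  set c := f y / ω.eval y with hc
  have hfy : f y = c * ω.eval y := (div_mul_cancel₀ _ hωy).symm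
  set h : ℝ → ℝ := fun t => f t - c * ω.eval t with hh
  have hhs : ContDiff ℝ (⊤ : ℕ∞) h := hf.sub (contDiff_const.mul (polyContDiff ω))
  set m' : ℝ → ℕ := fun x => if x = y then 1 else m x with hm'
  have hsum' : ∑ x ∈ insert y s, m' x = N + 1 := by
    rw [Finset.sum_insert hyns]
    have : ∑ x ∈ s, m' x = N := by
      rw [hN]
      apply Finset.sum_congr rfl
      intro x hx
      have : x ≠ y := fun hc => hyns (hc ▸ hx)
      simp [hm', this]
    rw [this, show m' y = 1 by simp [hm']]
    omega
  have hzero' : ∀ x ∈ insert y s, ∀ i < m' x, iteratedDeriv i h x = 0 := by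
    intro x hx i hi
    rw [hh]
    rw [itd_sub_mul i f (fun t => ω.eval t) c hf (polyContDiff ω) x]
    rcases Finset.mem_insert.mp hx with rfl | hxs
    · have : i = 0 := by simp [hm'] at hi; omega
      subst this
      simp only [iteratedDeriv_zero]
      rw [hfy]; ring
    · have hxy : x ≠ y := fun hc => hyns (hc ▸ hxs)
      have hi' : i < m x := by simpa [hm', hxy] using hi
      rw [hz x hxs i hi']
      have : iteratedDeriv i (fun t : ℝ => ω.eval t) x = 0 := by
        rw [itdEval]
        have hdvd : (X - C x) ^ m x ∣ ω := Finset.dvd_prod_of_mem _ hxs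
        have hrm : m x ≤ ω.rootMultiplicity x :=
          (Polynomial.le_rootMultiplicity_iff hmonic.ne_zero).mpr hdvd
        exact Polynomial.isRoot_iterate_derivative_of_lt_rootMultiplicity (by omega)
      rw [this]; ring
  obtain ⟨ξ, hξmem, hξ⟩ := hgenRolle N h hhs A B (insert y s) m'
    (by
      intro x hx
      rcases Finset.mem_insert.mp hx with rfl | hxs
      · exact hy
      · exact hmem x hxs)
    hzero' (le_of_eq hsum'.symm)
  have hitdω : iteratedDeriv N (fun t : ℝ => ω.eval t) ξ = (Nat.factorial N : ℝ) := by
    rw [itdEval, iterDerivTop N ω hdeg.le, hcoeff]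
    simp
  have hξ' : iteratedDeriv N f ξ = c * (Nat.factorial N : ℝ) := by
    rw [hh] at hξ
    rw [itd_sub_mul N f (fun t => ω.eval t) c hf (polyContDiff ω) ξ, hitdω] at hξ
    linarith
  have hfac : (0 : ℝ) < (Nat.factorial N : ℝ) := by positivity
  have hAB : A ≤ B := hy.1.trans hy.2
  have hcle : |c| ≤ K / (Nat.factorial N : ℝ) := by
    have := hK ξ hξmem
    rw [hξ', abs_mul, Nat.abs_cast] at this
    rw [le_div_iff₀ hfac]
    exact this
  have hωyle : |ω.eval y| ≤ (B - A) ^ N := by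
    rw [hω, Polynomial.eval_prod, Finset.abs_prod]
    have : (B - A) ^ N = ∏ x ∈ s, (B - A) ^ m x := by
      rw [hN, ← Finset.prod_pow_eq_pow_sum]
    rw [this]
    apply Finset.prod_le_prod
    · intro x _; positivity
    · intro x hx
      simp only [Polynomial.eval_pow, Polynomial.eval_sub, Polynomial.eval_X, Polynomial.eval_C,
        _root_.abs_pow]
      apply pow_le_pow_left₀ (abs_nonneg _)
      have h1 := hmem x hx
      rw [abs_le]
      constructor <;> [linarith [hy.1, h1.2]; linarith [hy.2, h1.1]]
  have hK0 : 0 ≤ K := le_trans (abs_nonneg _) (hK y hy)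
  calc |f y| = |c| * |ω.eval y| := by rw [hfy, abs_mul]
    _ ≤ (K / (Nat.factorial N : ℝ)) * (B - A) ^ N := by
        apply mul_le_mul hcle hωyle (abs_nonneg _) (by positivity)
    _ = (B - A) ^ N / (Nat.factorial N : ℝ) * K := by ring



theorem genRolle : ∀ (N : ℕ) (f : ℝ → ℝ), ContDiff ℝ (⊤ : ℕ∞) f → ∀ (A B : ℝ) (s : Finset ℝ) (m : ℝ → ℕ),
    (∀ x ∈ s, x ∈ Set.Icc A B) → (∀ x ∈ s, ∀ i < m x, iteratedDeriv i f x = 0) →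
    N + 1 ≤ ∑ x ∈ s, m x → ∃ ξ ∈ Set.Icc A B, iteratedDeriv N f ξ = 0 := by
  intro N
  induction N with
  | zero =>
    intro f hf A B s m hmem hz hsum
    have : ∃ x ∈ s, m x ≠ 0 := by
      by_contra h
      push_neg at h
      rw [Finset.sum_eq_zero h] at hsum
      omega
    obtain ⟨x, hx, hmx⟩ := this
    exact ⟨x, hmem x hx, hz x hx 0 (by omega)⟩
  | succ N ih =>
    intro f hf A B s m hmem hz hsum
    classical
    set s₀ := s.filter (fun x => m x ≠ 0) with hs₀
    have hsum0 : ∑ x ∈ s₀, m x = ∑ x ∈ s, m x := Finset.sum_filter_ne_zero s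
    have hmem0 : ∀ x ∈ s₀, x ∈ Set.Icc A B := fun x hx => hmem x (Finset.mem_filter.mp hx).1
    have hz0 : ∀ x ∈ s₀, ∀ i < m x, iteratedDeriv i f x = 0 :=
      fun x hx => hz x (Finset.mem_filter.mp hx).1
    have hm1 : ∀ x ∈ s₀, 1 ≤ m x := by
      intro x hx
      have := (Finset.mem_filter.mp hx).2
      omega
    set k := s₀.card with hk
    set l := s₀.sort (· ≤ ·) with hl
    have hlen : l.length = k := Finset.length_sort _
    have hsorted : l.SortedLT := Finset.sortedLT_sort s₀
    have hgetmem : ∀ i : Fin l.length, l.get i ∈ s₀ := by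
      intro i
      have := l.get_mem i
      exact (Finset.mem_sort (α := ℝ) (· ≤ ·)).mp this
    have hmono : StrictMono l.get := List.SortedLT.strictMono_get hsorted
    -- Rolle points
    have hex : ∀ i : Fin (k - 1), ∃ c,
        c ∈ Set.Ioo (l.get ⟨i.1, by omega⟩) (l.get ⟨i.1 + 1, by omega⟩) ∧ deriv f c = 0 := by
      intro i
      have hlt : l.get ⟨i.1, by omega⟩ < l.get ⟨i.1 + 1, by omega⟩ := by
        apply hmono
        simp [Fin.lt_def]
      have h1 : f (l.get ⟨i.1, by omega⟩) = 0 := by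
        have hm := hgetmem ⟨i.1, by omega⟩
        have := hz0 _ hm 0 (by have := hm1 _ hm; omega)
        simpa using this
      have h2 : f (l.get ⟨i.1 + 1, by omega⟩) = 0 := by
        have hm := hgetmem ⟨i.1 + 1, by omega⟩
        have := hz0 _ hm 0 (by have := hm1 _ hm; omega)
        simpa using this
      obtain ⟨c, hc, hc'⟩ := exists_deriv_eq_zero hlt hf.continuous.continuousOn (h1.trans h2.symm)
      exact ⟨c, hc, hc'⟩
    choose R hRmem hRz using hex
    have hRmono : StrictMono R := by
      intro i j hij
      calc R i < l.get ⟨i.1 + 1, by omega⟩ := (hRmem i).2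
        _ ≤ l.get ⟨j.1, by omega⟩ := by
            rcases eq_or_lt_of_le (show i.1 + 1 ≤ j.1 from hij) with h | h
            · exact le_of_eq (congrArg _ (Fin.ext h))
            · exact le_of_lt (hmono (by simpa [Fin.lt_def] using h))
        _ < R j := (hRmem j).1
    set T := Finset.image R Finset.univ with hT
    have hTcard : T.card = k - 1 := by
      rw [hT, Finset.card_image_of_injective _ hRmono.injective, Finset.card_univ, Fintype.card_fin]
    have hTdisj : Disjoint s₀ T := by
      rw [Finset.disjoint_right]
      intro x hxT hxs
      obtain ⟨i, _, rfl⟩ := Finset.mem_image.mp hxT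
      obtain ⟨j, hj⟩ := List.mem_iff_get.mp ((Finset.mem_sort (α := ℝ) (· ≤ ·)).mpr hxs)
      have h1 : l.get ⟨i.1, by omega⟩ < l.get j := hj ▸ (hRmem i).1
      have h2 : l.get j < l.get ⟨i.1 + 1, by omega⟩ := hj ▸ (hRmem i).2
      have hj1 : (⟨i.1, by omega⟩ : Fin l.length) < j := hmono.lt_iff_lt.mp h1
      have hj2 : j < (⟨i.1 + 1, by omega⟩ : Fin l.length) := hmono.lt_iff_lt.mp h2
      rw [Fin.lt_def] at hj1 hj2
      simp at hj1 hj2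
      omega
    have hTmem : ∀ x ∈ T, x ∈ Set.Icc A B := by
      intro x hxT
      obtain ⟨i, _, rfl⟩ := Finset.mem_image.mp hxT
      have h1 := (hRmem i).1
      have h2 := (hRmem i).2
      have m1 := hmem0 _ (hgetmem ⟨i.1, by omega⟩)
      have m2 := hmem0 _ (hgetmem ⟨i.1 + 1, by omega⟩)
      exact ⟨le_trans m1.1 h1.le, le_trans h2.le m2.2⟩
    set m' : ℝ → ℕ := fun x => if x ∈ s₀ then m x - 1 else if x ∈ T then 1 else 0 with hm'
    have hf' : ContDiff ℝ (⊤ : ℕ∞) (deriv f) := (contDiff_infty_iff_deriv.mp hf).2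
    have happ : ∃ ξ ∈ Set.Icc A B, iteratedDeriv N (deriv f) ξ = 0 := by
      apply ih (deriv f) hf' A B (s₀ ∪ T) m'
      · intro x hx
        rcases Finset.mem_union.mp hx with h | h
        · exact hmem0 x h
        · exact hTmem x h
      · intro x hx i hi
        rcases Finset.mem_union.mp hx with h | h
        · have : i + 1 < m x := by
            have : m' x = m x - 1 := by simp [hm', h]
            omega
          rw [← iteratedDeriv_succ']
          exact hz0 x h _ this
        · have hxns : x ∉ s₀ := Finset.disjoint_right.mp hTdisj h
          have : m' x = 1 := by simp [hm', hxns, h]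
          have hi0 : i = 0 := by omega
          obtain ⟨j, _, rfl⟩ := Finset.mem_image.mp h
          subst hi0
          simpa using hRz j
      · have hsum' : ∑ x ∈ s₀ ∪ T, m' x = (∑ x ∈ s₀, (m x - 1)) + (k - 1) := by
          rw [Finset.sum_union hTdisj]
          congr 1
          · apply Finset.sum_congr rfl
            intro x hx
            simp [hm', hx]
          · rw [← hTcard]
            rw [Finset.card_eq_sum_ones]
            apply Finset.sum_congr rfl
            intro x hx
            have hxns : x ∉ s₀ := Finset.disjoint_right.mp hTdisj hx
            simp [hm', hxns, hx]
        have hsub : (∑ x ∈ s₀, (m x - 1)) + k = ∑ x ∈ s₀, m x := by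
          rw [hk, Finset.card_eq_sum_ones, ← Finset.sum_add_distrib]
          exact Finset.sum_congr rfl fun x hx => Nat.sub_add_cancel (hm1 x hx)
        have hk1 : 1 ≤ k := by
          rcases Nat.eq_zero_or_pos k with h | h
          · exfalso
            rw [hk, Finset.card_eq_zero] at h
            rw [h, Finset.sum_empty] at hsum0
            omega
          · exact h
        rw [hsum']
        omega
    obtain ⟨ξ, hξ, hξ0⟩ := happ
    exact ⟨ξ, hξ, by rwa [iteratedDeriv_succ']⟩


theorem normCosLe (w : ℂ) : ‖Complex.cos w‖ ≤ Real.exp |w.im| := by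
  have h : Complex.cos w = (Complex.exp (w * I) + Complex.exp (-w * I)) / 2 := rfl
  rw [h]
  have h1 : ‖Complex.exp (w * I)‖ ≤ Real.exp |w.im| := by
    rw [Complex.norm_exp]
    apply Real.exp_le_exp.mpr
    simp [Complex.mul_I_re]
    exact neg_le_abs _
  have h2 : ‖Complex.exp (-w * I)‖ ≤ Real.exp |w.im| := by
    rw [Complex.norm_exp]
    apply Real.exp_le_exp.mpr
    simp [Complex.mul_I_re]
    exact le_abs_self _
  calc ‖(Complex.exp (w * I) + Complex.exp (-w * I)) / 2‖
      ≤ (‖Complex.exp (w * I)‖ + ‖Complex.exp (-w * I)‖) / 2 := by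
        rw [norm_div]
        simp only [Complex.norm_ofNat]
        gcongr
        exact norm_add_le _ _
    _ ≤ Real.exp |w.im| := by linarith

theorem normSinLe (w : ℂ) : ‖Complex.sin w‖ ≤ Real.exp |w.im| := by
  have h : Complex.sin w = (Complex.exp (-w * I) - Complex.exp (w * I)) * I / 2 := rfl
  rw [h]
  have h1 : ‖Complex.exp (w * I)‖ ≤ Real.exp |w.im| := by
    rw [Complex.norm_exp]
    apply Real.exp_le_exp.mpr
    simp [Complex.mul_I_re]
    exact neg_le_abs _
  have h2 : ‖Complex.exp (-w * I)‖ ≤ Real.exp |w.im| := by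
    rw [Complex.norm_exp]
    apply Real.exp_le_exp.mpr
    simp [Complex.mul_I_re]
    exact le_abs_self _
  calc ‖(Complex.exp (-w * I) - Complex.exp (w * I)) * I / 2‖
      ≤ (‖Complex.exp (-w * I)‖ + ‖Complex.exp (w * I)‖) / 2 := by
        rw [norm_div, norm_mul]
        simp only [Complex.norm_ofNat, Complex.norm_I, mul_one]
        gcongr
        exact norm_sub_le _ _
    _ ≤ Real.exp |w.im| := by linarith


theorem stripBound (n : ℕ) (F : ℂ → ℂ) (hFdiff : Differentiable ℂ F) (M Bd : ℝ)
    (hreal : ∀ t : ℝ, ‖F t‖ ≤ M)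
    (hglob : ∀ z : ℂ, ‖F z‖ ≤ Bd * Real.exp (n * |z.im|))
    (hconj : ∀ z, F ((starRingEnd ℂ) z) = (starRingEnd ℂ) (F z)) :
    ∀ z : ℂ, ‖F z‖ ≤ M * Real.exp (n * |z.im|) := by
  set g : ℂ → ℂ := fun z => Complex.exp (n * I * z) * F z with hg
  have hgnorm : ∀ z : ℂ, ‖g z‖ = Real.exp (-(n * z.im)) * ‖F z‖ := by
    intro z
    rw [hg]
    simp only [norm_mul, Complex.norm_exp]
    congr 2
    simp [Complex.mul_re, Complex.mul_im]
  have hgdiff : Differentiable ℂ g :=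
    (Complex.differentiable_exp.comp ((differentiable_const _).mul differentiable_id)).mul hFdiff
  set G : ℂ → ℂ := fun w => g (w * I) with hG
  have hGd : Differentiable ℂ G := by exact hgdiff.comp (differentiable_id.mul_const I)
  have hupper : ∀ w : ℂ, 0 ≤ w.re → ‖G w‖ ≤ M := by
    intro w hw
    apply PhragmenLindelof.right_half_plane_of_bounded_on_real (f := G)
      (hd := hGd.diffContOnCl)
      (hexp := ?_) (hre := ?_) (him := ?_) (hz := hw)
    · refine ⟨1, one_lt_two, 0, Asymptotics.IsBigO.of_bound Bd ?_⟩
      rw [Filter.eventually_inf_principal]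
      apply Filter.Eventually.of_forall
      intro z hz
      have hzim : (z * I).im = z.re := by simp
      have h1 : ‖G z‖ ≤ Bd := by
        rw [hG]
        simp only []
        rw [hgnorm, hzim]
        calc Real.exp (-(n * z.re)) * ‖F (z * I)‖
            ≤ Real.exp (-(n * z.re)) * (Bd * Real.exp (n * |(z * I).im|)) := by
              apply mul_le_mul_of_nonneg_left (hglob _) (Real.exp_nonneg _)
          _ = Bd := by
              rw [hzim, _root_.abs_of_nonneg (le_of_lt hz)]
              rw [mul_comm (Bd) _, ← mul_assoc, ← Real.exp_add]
              simp
      simpa using h1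
    · apply Filter.isBoundedUnder_of_eventually_le (a := Bd)
      rw [Filter.eventually_atTop]
      refine ⟨0, fun x hx => ?_⟩
      have hzim : ((x : ℂ) * I).im = x := by simp
      rw [hG]
      simp only []
      rw [hgnorm, hzim]
      calc Real.exp (-(n * x)) * ‖F ((x:ℂ) * I)‖
          ≤ Real.exp (-(n * x)) * (Bd * Real.exp (n * |((x:ℂ) * I).im|)) := by
            apply mul_le_mul_of_nonneg_left (hglob _) (Real.exp_nonneg _)
        _ = Bd := by
            rw [hzim, _root_.abs_of_nonneg hx]
            rw [mul_comm (Bd) _, ← mul_assoc, ← Real.exp_add]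
            simp
    · intro x
      have h1 : ((x : ℂ) * I * I) = ((-x : ℝ) : ℂ) := by
        push_cast
        rw [mul_assoc, Complex.I_mul_I]
        ring
      rw [hG]
      simp only []
      rw [h1, hgnorm]
      simp only [Complex.ofReal_im, neg_zero, mul_zero, Real.exp_zero, one_mul]
      exact hreal _
  have hupper' : ∀ z : ℂ, 0 ≤ z.im → ‖F z‖ ≤ M * Real.exp (n * z.im) := by
    intro z hz
    have h1 : ‖G (-z * I)‖ ≤ M := by
      apply hupper
      simp [hz]
    have h2 : (-z * I * I) = z := by
      rw [mul_assoc, Complex.I_mul_I]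
      ring
    rw [hG] at h1
    simp only [] at h1
    rw [h2, hgnorm] at h1
    calc ‖F z‖ = (Real.exp (-(n * z.im)) * ‖F z‖) * Real.exp (n * z.im) := by
          rw [mul_comm (Real.exp (-(n * z.im))) _, mul_assoc, ← Real.exp_add]
          simp
      _ ≤ M * Real.exp (n * z.im) := by
          apply mul_le_mul_of_nonneg_right h1 (Real.exp_nonneg _)
  intro z
  rcases le_or_gt 0 z.im with hz | hz
  · rw [_root_.abs_of_nonneg hz]
    exact hupper' z hz
  · have h1 : ‖F ((starRingEnd ℂ) z)‖ ≤ M * Real.exp (n * ((starRingEnd ℂ) z).im) :=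
      hupper' _ (by simp; linarith)
    rw [hconj] at h1
    have h2 : ‖(starRingEnd ℂ) (F z)‖ = ‖F z‖ := RCLike.norm_conj _
    rw [h2] at h1
    have h3 : ((starRingEnd ℂ) z).im = -z.im := by simp
    rw [h3] at h1
    rw [_root_.abs_of_neg hz]
    simpa using h1


theorem cauchyBound (F : ℂ → ℂ) (hFdiff : Differentiable ℂ F) (c : ℂ) (ρ : ℝ) (hρ : 0 < ρ)
    (K : ℝ) (hK : ∀ z : ℂ, ‖z - c‖ = ρ → ‖F z‖ ≤ K) (μ : ℕ) :
    ‖iteratedDeriv μ F c‖ ≤ (Nat.factorial μ : ℝ) * K / ρ ^ μ := by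
  have hK0 : 0 ≤ K := le_trans (norm_nonneg _) (hK (c + ρ) (by simp [abs_of_pos hρ]))
  set R : NNReal := ⟨ρ, hρ.le⟩ with hR
  have hRpos : (0 : NNReal) < R := by exact_mod_cast hρ
  have hps := hFdiff.hasFPowerSeriesOnBall c hRpos
  set p := cauchyPowerSeries F c R with hp
  have h1 : iteratedDeriv μ F c = (Nat.factorial μ : ℂ) * (p μ fun _ => (1 : ℂ)) := by
    rw [iteratedDeriv_eq_iteratedFDeriv, ← hps.factorial_smul (y := (1 : ℂ)) μ]
    simp [nsmul_eq_mul]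
  have h2 : ‖p μ fun _ => (1 : ℂ)‖ ≤ ‖p μ‖ := by
    have := (p μ).le_opNorm fun _ => (1 : ℂ)
    simpa using this
  have h3 : ‖p μ‖ ≤ K * (ρ⁻¹) ^ μ := by
    have h4 := norm_cauchyPowerSeries_le F c R μ
    have hint : (∫ θ : ℝ in (0)..2 * Real.pi, ‖F (circleMap c R θ)‖) ≤ 2 * Real.pi * K := by
      have : (2 * Real.pi * K) = ∫ _ : ℝ in (0)..2 * Real.pi, K := by
        simp [mul_comm]
      rw [this]
      apply intervalIntegral.integral_mono_on Real.two_pi_pos.le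
      · exact ((hFdiff.continuous.comp (continuous_circleMap c R)).norm).intervalIntegrable _ _
      · exact intervalIntegrable_const
      · intro θ _
        apply hK
        rw [circleMap_sub_center, norm_circleMap_zero]
        exact _root_.abs_of_nonneg hρ.le
    calc ‖p μ‖ ≤ ((2 * Real.pi)⁻¹ * ∫ θ : ℝ in (0)..2 * Real.pi, ‖F (circleMap c R θ)‖) *
          |(R : ℝ)|⁻¹ ^ μ := h4
      _ ≤ ((2 * Real.pi)⁻¹ * (2 * Real.pi * K)) * |(R : ℝ)|⁻¹ ^ μ := by
          have hi : (0:ℝ) ≤ (2 * Real.pi)⁻¹ := by positivity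
          gcongr
      _ = K * (ρ⁻¹) ^ μ := by
          rw [← mul_assoc, inv_mul_cancel₀ Real.two_pi_pos.ne', one_mul]
          congr
          exact _root_.abs_of_nonneg hρ.le
  calc ‖iteratedDeriv μ F c‖ = (Nat.factorial μ : ℝ) * ‖p μ fun _ => (1 : ℂ)‖ := by
        rw [h1, norm_mul]
        simp
    _ ≤ (Nat.factorial μ : ℝ) * (K * (ρ⁻¹) ^ μ) := by
        apply mul_le_mul_of_nonneg_left (h2.trans h3) (by positivity)
    _ = (Nat.factorial μ : ℝ) * K / ρ ^ μ := by
        rw [inv_pow]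
        ring


theorem itdReal (F : ℂ → ℂ) (hFdiff : Differentiable ℂ F) (S : ℝ → ℝ)
    (hFS : ∀ t : ℝ, F t = (S t : ℂ)) :
    ∀ (k : ℕ) (t : ℝ), iteratedDeriv k S t = (iteratedDeriv k F t).re := by
  have hdk : ∀ k, Differentiable ℂ (iteratedDeriv k F) := by
    intro k; induction k with
    | zero => simpa using hFdiff
    | succ k ih =>
      rw [iteratedDeriv_succ]
      exact ((contDiff_infty_iff_deriv.mp (ih.contDiff)).2).differentiable
        (by simp)
  intro k
  induction k with
  | zero => intro t; simp [iteratedDeriv_zero, hFS t]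
  | succ k ih =>
    intro t
    have hfun : iteratedDeriv k S = fun t : ℝ => (iteratedDeriv k F t).re := funext ih
    rw [iteratedDeriv_succ, hfun]
    have h1 : HasDerivAt (iteratedDeriv k F) (iteratedDeriv (k+1) F (t:ℂ)) (t:ℂ) := by
      rw [iteratedDeriv_succ]
      exact ((hdk k).differentiableAt).hasDerivAt
    exact h1.real_of_complex.deriv

end Aux

open Finset

theorem zeros_in_small_value_intervals (n : ℕ) (a b : ℕ → ℝ) (S : ℝ → ℝ)
    (hS : ∀ t, S t = a 0 + ∑ j ∈ Finset.Icc 1 n,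
      (a j * Real.cos (j * t) + b j * Real.sin (j * t)))
    (α : ℝ) (hα : α ∈ Set.Ioo (0 : ℝ) 1)
    (M : ℝ) (hM : M = ⨆ t : ℝ, |S t|)
    (m : ℕ) (u v : Fin m → ℝ) (huv : ∀ j, u j ≤ v j)
    (hdisj : Pairwise (Function.onFun Disjoint fun j => Set.Icc (u j) (v j)))
    (hunion : {t : ℝ | t ∈ Set.Ico 0 (2 * Real.pi) ∧ |S t| ≤ α * M} =
      ⋃ j, Set.Icc (u j) (v j))
    (y : Fin m → ℝ) (hy : ∀ j, y j ∈ Set.Icc (u j) (v j))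
    (hySy : ∀ j, |S (y j)| = α * M)
    (Z : Fin m → Finset ℝ) (mult : ℝ → ℕ)
    (hZ : ∀ j, ∀ x ∈ Z j, x ∈ Set.Icc (u j) (v j))
    (hmul : ∀ j, ∀ x ∈ Z j, ∀ i < mult x, iteratedDeriv i S x = 0) :
    ∀ j, (∑ x ∈ Z j, (mult x : ℝ)) ≤ Real.exp 1 * n / α * (v j - u j) := by
  intro j
  classical
  obtain ⟨hα0, hα1⟩ := hα
  set Bd : ℝ := |a 0| + ∑ i ∈ Finset.Icc 1 n, (|a i| + |b i|) with hBd
  have hSb : ∀ t, |S t| ≤ Bd := by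
    intro t
    rw [hS t, hBd]
    refine (abs_add_le _ _).trans (add_le_add le_rfl ?_)
    refine (Finset.abs_sum_le_sum_abs _ _).trans ?_
    apply Finset.sum_le_sum
    intro i _
    refine (abs_add_le _ _).trans (add_le_add ?_ ?_)
    · rw [abs_mul]
      exact mul_le_of_le_one_right (abs_nonneg _) (Real.abs_cos_le_one _)
    · rw [abs_mul]
      exact mul_le_of_le_one_right (abs_nonneg _) (Real.abs_sin_le_one _)
  have hbdd : BddAbove (Set.range fun t => |S t|) := ⟨Bd, by rintro w ⟨t, rfl⟩; exact hSb t⟩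
  have hMub : ∀ t, |S t| ≤ M := by intro t; rw [hM]; exact le_ciSup hbdd t
  have hM0 : 0 ≤ M := (abs_nonneg _).trans (hMub 0)
  have hr0 : (0:ℝ) ≤ v j - u j := sub_nonneg.mpr (huv j)
  set r : ℝ := v j - u j with hrdef
  set s₀ : Finset ℝ := (Z j).filter (fun x => mult x ≠ 0) with hs₀def
  have hsum_eq : (∑ x ∈ Z j, (mult x : ℝ)) = ((∑ x ∈ s₀, mult x : ℕ) : ℝ) := by
    rw [hs₀def, Finset.sum_filter_ne_zero]
    push_cast
    rfl
  rw [hsum_eq]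
  set N : ℕ := ∑ x ∈ s₀, mult x with hNdef
  rcases Nat.eq_zero_or_pos N with hN0 | hNpos
  · rw [hN0]
    push_cast
    positivity
  have hs₀ne : s₀.Nonempty := by
    by_contra hne
    rw [Finset.not_nonempty_iff_eq_empty] at hne
    rw [hNdef, hne, Finset.sum_empty] at hNpos
    omega
  obtain ⟨x₀, hx₀⟩ := hs₀ne
  have hx₀Z : x₀ ∈ Z j := (Finset.mem_filter.mp hx₀).1
  have hx₀m : mult x₀ ≠ 0 := (Finset.mem_filter.mp hx₀).2
  have hSx₀ : S x₀ = 0 := by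
    have := hmul j x₀ hx₀Z 0 (by omega)
    simpa using this
  by_cases hS0 : ∀ t, S t = 0
  · exfalso
    have hM00 : M = 0 := by
      rw [hM]
      have : (fun t : ℝ => |S t|) = fun _ : ℝ => (0:ℝ) := funext fun t => by rw [hS0 t]; simp
      rw [this, ciSup_const]
    have hset : {t : ℝ | t ∈ Set.Ico 0 (2*Real.pi) ∧ |S t| ≤ α * M} =
        Set.Ico 0 (2*Real.pi) := by
      ext t
      simp [hS0 t, hM00]
    rw [hset] at hunion
    have hclosed : IsClosed (⋃ i, Set.Icc (u i) (v i)) :=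
      isClosed_iUnion_of_finite fun i => isClosed_Icc
    rw [← hunion] at hclosed
    have h2π : (2*Real.pi) ∈ closure (Set.Ico 0 (2*Real.pi)) := by
      rw [closure_Ico (ne_of_lt Real.two_pi_pos)]
      exact ⟨Real.two_pi_pos.le, le_refl _⟩
    rw [hclosed.closure_eq] at h2π
    exact lt_irrefl _ h2π.2
  push_neg at hS0
  obtain ⟨t₀, ht₀⟩ := hS0
  have hMpos : 0 < M := lt_of_lt_of_le (abs_pos.mpr ht₀) (hMub t₀)
  have hn1 : 1 ≤ n := by
    by_contra hn
    push_neg at hn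
    have hn0 : n = 0 := by omega
    subst hn0
    have h1 : ∀ t, S t = a 0 := by intro t; rw [hS t]; simp
    apply ht₀
    rw [h1 t₀, ← h1 x₀]
    exact hSx₀
  have hSc : ContDiff ℝ (⊤:ℕ∞) S := by
    have hSfun : S = fun t => a 0 + ∑ i ∈ Finset.Icc 1 n,
        (a i * Real.cos (i*t) + b i * Real.sin (i*t)) := funext hS
    rw [hSfun]
    apply ContDiff.add contDiff_const
    apply ContDiff.sum
    intro i _
    exact ((contDiff_const.mul (Real.contDiff_cos.comp (contDiff_const.mul contDiff_id)))).add
      ((contDiff_const.mul (Real.contDiff_sin.comp (contDiff_const.mul contDiff_id))))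
  set F : ℂ → ℂ := fun z => (a 0 : ℂ) + ∑ i ∈ Finset.Icc 1 n,
      ((a i : ℂ) * Complex.cos (i*z) + (b i : ℂ) * Complex.sin (i*z)) with hF
  have hFdiff : Differentiable ℂ F := by
    apply Differentiable.add (differentiable_const _)
    apply Differentiable.fun_sum
    intro i _
    exact ((differentiable_const _).mul
        (Complex.differentiable_cos.comp ((differentiable_const _).mul differentiable_id))).add
      ((differentiable_const _).mul
        (Complex.differentiable_sin.comp ((differentiable_const _).mul differentiable_id)))
  have hFS : ∀ t : ℝ, F t = (S t : ℂ) := by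
    intro t
    rw [hF, hS t]
    push_cast [Complex.ofReal_cos, Complex.ofReal_sin]
    rfl
  have hconj : ∀ z, F ((starRingEnd ℂ) z) = (starRingEnd ℂ) (F z) := by
    intro z
    rw [hF]
    simp only [map_add, map_sum, map_mul, Complex.cos_conj, Complex.sin_conj,
      Complex.conj_ofReal]
    congr 1
    apply Finset.sum_congr rfl
    intro i _
    have : (starRingEnd ℂ) (i : ℂ) = (i : ℂ) := by
      simp [Complex.conj_natCast]
    rw [← Complex.cos_conj, ← Complex.sin_conj, map_mul, this]
  have hFglob : ∀ z : ℂ, ‖F z‖ ≤ Bd * Real.exp (n * |z.im|) := by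
    intro z
    have hexp1 : (1:ℝ) ≤ Real.exp (n * |z.im|) := by
      rw [← Real.exp_zero]
      apply Real.exp_le_exp.mpr
      positivity
    rw [hF, hBd]
    refine (norm_add_le _ _).trans ?_
    rw [add_mul]
    apply add_le_add
    · calc ‖((a 0 : ℝ) : ℂ)‖ = |a 0| := by simp [Complex.norm_real]
        _ ≤ |a 0| * Real.exp (n * |z.im|) := le_mul_of_one_le_right (abs_nonneg _) hexp1
    · refine (norm_sum_le _ _).trans ?_
      rw [Finset.sum_mul]
      apply Finset.sum_le_sum
      intro i hi
      have hin : (i:ℝ) ≤ (n:ℝ) := by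
        exact_mod_cast (Finset.mem_Icc.mp hi).2
      have hcos : ‖Complex.cos ((i:ℂ)*z)‖ ≤ Real.exp (n * |z.im|) := by
        refine (normCosLe _).trans ?_
        apply Real.exp_le_exp.mpr
        have : ((i:ℂ)*z).im = (i:ℝ) * z.im := by simp
        rw [this, abs_mul, Nat.abs_cast]
        exact mul_le_mul_of_nonneg_right hin (abs_nonneg _)
      have hsin : ‖Complex.sin ((i:ℂ)*z)‖ ≤ Real.exp (n * |z.im|) := by
        refine (normSinLe _).trans ?_
        apply Real.exp_le_exp.mpr
        have : ((i:ℂ)*z).im = (i:ℝ) * z.im := by simp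
        rw [this, abs_mul, Nat.abs_cast]
        exact mul_le_mul_of_nonneg_right hin (abs_nonneg _)
      refine (norm_add_le _ _).trans ?_
      rw [add_mul]
      apply add_le_add
      · rw [norm_mul]
        apply mul_le_mul _ hcos (norm_nonneg _) (abs_nonneg _)
        simp [Complex.norm_real]
      · rw [norm_mul]
        apply mul_le_mul _ hsin (norm_nonneg _) (abs_nonneg _)
        simp [Complex.norm_real]
  have hstrip := stripBound n F hFdiff M Bd
    (fun t => by rw [hFS t]; simpa [Complex.norm_real] using hMub t) hFglob hconj
  have hitd := itdReal F hFdiff S hFS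
  set ρ : ℝ := (N:ℝ) / n with hρdef
  have hnpos : (0:ℝ) < n := by exact_mod_cast hn1
  have hρ : 0 < ρ := div_pos (by exact_mod_cast hNpos) hnpos
  set K : ℝ := (Nat.factorial N : ℝ) * (M * Real.exp (n * ρ)) / ρ ^ N with hKdef
  have hKbound : ∀ t ∈ Set.Icc (u j) (v j), |iteratedDeriv N S t| ≤ K := by
    intro t _
    rw [hitd N t]
    refine le_trans (Complex.abs_re_le_norm _) ?_
    apply cauchyBound F hFdiff t ρ hρ (M * Real.exp (n*ρ)) ?_ N
    intro z hz
    refine (hstrip z).trans ?_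
    have him : |z.im| ≤ ρ := by
      calc |z.im| = |(z - (t:ℂ)).im| := by simp
        _ ≤ ‖z - (t:ℂ)‖ := Complex.abs_im_le_norm _
        _ = ρ := hz
    have := Real.exp_le_exp.mpr (mul_le_mul_of_nonneg_left him (le_of_lt hnpos))
    exact mul_le_mul_of_nonneg_left this hM0
  have hsmem : ∀ x ∈ s₀, x ∈ Set.Icc (u j) (v j) :=
    fun x hx => hZ j x (Finset.mem_filter.mp hx).1
  have hsz : ∀ x ∈ s₀, ∀ i < mult x, iteratedDeriv i S x = 0 :=
    fun x hx => hmul j x (Finset.mem_filter.mp hx).1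
  have hyns : y j ∉ s₀ := by
    intro hmem
    have h1 : S (y j) = 0 := by
      have := hsz (y j) hmem 0 (by have := (Finset.mem_filter.mp hmem).2; omega)
      simpa using this
    have h2 := hySy j
    rw [h1] at h2
    simp at h2
    rcases h2 with h | h
    · exact hα0.ne' h
    · exact hMpos.ne' h
  have hherm := hermite_bound S hSc (u j) (v j) s₀ mult hsmem
    (fun x hx => (Finset.mem_filter.mp hx).2) hsz (y j) (hy j) hyns K hKbound genRolle
  rw [hySy j] at hherm
  -- hherm : α * M ≤ r ^ N / N! * K
  have hfacpos : (0:ℝ) < (Nat.factorial N : ℝ) := by positivity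
  have hee : Real.exp ((n:ℝ) * ρ) = Real.exp 1 ^ N := by
    have h0 : (n:ℝ) * ρ = ((N:ℕ):ℝ) * 1 := by
      rw [hρdef]
      field_simp
    rw [h0]
    exact Real.exp_nat_mul 1 N
  set q : ℝ := r * (n:ℝ) * Real.exp 1 / (N:ℝ) with hq
  have hNr : (0:ℝ) < (N:ℝ) := by exact_mod_cast hNpos
  have hq0 : 0 ≤ q := by positivity
  have hkey : α ≤ q ^ N := by
    have hρpow : ρ ^ N = (N:ℝ)^N / (n:ℝ)^N := by rw [hρdef, div_pow]
    have hqpow : q ^ N = r^N * (n:ℝ)^N * (Real.exp 1)^N / (N:ℝ)^N := by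
      rw [hq, div_pow, mul_pow, mul_pow]
    have h1 : r ^ N / (Nat.factorial N : ℝ) * K = M * (q ^ N) := by
      rw [hKdef, hee, hρpow, hqpow]
      have hNn0 : ((N:ℝ))^N ≠ 0 := by positivity
      have hnn0 : ((n:ℝ))^N ≠ 0 := by positivity
      field_simp
    have h2 : α * M ≤ M * q ^ N := by rw [← h1]; exact hherm
    nlinarith [hMpos]
  have hfin : α * N ≤ Real.exp 1 * n * r := by
    rcases le_or_gt q 1 with hq1 | hq1
    · have h3 : α ≤ q := le_trans hkey (pow_le_of_le_one hq0 hq1 (by omega))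
      calc α * N ≤ q * N := mul_le_mul_of_nonneg_right h3 hNr.le
        _ = Real.exp 1 * n * r := by
            rw [hq]
            field_simp
    · have h5 : (N:ℝ) < r * n * Real.exp 1 := by
        have := (lt_div_iff₀ hNr).mp hq1
        linarith
      calc α * N ≤ 1 * N := mul_le_mul_of_nonneg_right hα1.le hNr.le
        _ = (N:ℝ) := one_mul _
        _ ≤ Real.exp 1 * n * r := by linarith
  have hgoal : Real.exp 1 * n / α * r = (Real.exp 1 * n * r) / α := by ring
  rw [hgoal, le_div_iff₀ hα0]
  linarith [hfin]
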